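/- Let P be a probability measure on R^d with continuous density p, fix a point x in the support of p, and let ε_k(x) be twice the ∞-norm distance from x to its k-th nearest neighbor among N−1 i.i.d. samples from P. With p_r(x) = P(B(x; r/2)) denoting the mass of the ∞-norm ball of radius r/2 around x, the expectation satisfies E[log p_{ε_k(x)}(x)] = ψ(k) − ψ(N). -/

import Mathlib

set_option linter.unusedSectionVars false
set_option linter.unusedVariables false
set_option linter.unusedTactic false
set_option maxHeartbeats 1000000


open MeasureTheory Real Filter
open scoped Classical ENNReal Topology

noncomputable section

/-- The digamma function `ψ(x) = Γ'(x) / Γ(x)`. -/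
def digamma (x : ℝ) : ℝ := deriv Real.Gamma x / Real.Gamma x

/-- The unit cube `[0,1]^d` in `ℝ^d`. -/
def unitCube (d : ℕ) : Set (Fin d → ℝ) := Set.univ.pi fun _ => Set.Icc (0:ℝ) 1

/-- The `ℓ¹`-norm of the gradient of `p` at `x`. -/
def gradL1Norm {d : ℕ} (p : (Fin d → ℝ) → ℝ) (x : Fin d → ℝ) : ℝ :=
  ∑ j : Fin d, |fderiv ℝ p x (Pi.single j 1)|

/-- The differential entropy `H(X) = -∫ p log p` of a density `p`. -/
def diffEntropy {d : ℕ} (p : (Fin d → ℝ) → ℝ) : ℝ :=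
  - ∫ x, p x * Real.log (p x)

/-- The distance (in the sup-norm) from a query point `x` to its `k`-th nearest
neighbor among the sample points `s 0, ..., s (m-1)`. -/
def kNNradius {d m : ℕ} (k : ℕ) (x : Fin d → ℝ) (s : Fin m → (Fin d → ℝ)) : ℝ :=
  sInf {r : ℝ | 0 ≤ r ∧ k ≤ (Finset.univ.filter (fun i => dist x (s i) ≤ r)).card}

/-- Twice the `k`-NN distance of a query point `x` among sample points `s`. -/
def twiceKNNdist {d m : ℕ} (k : ℕ) (x : Fin d → ℝ) (s : Fin m → (Fin d → ℝ)) : ℝ :=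
  2 * kNNradius k x s

/-- The leave-one-out `k`-NN distance of `xs i` among the other samples. -/
def kNNradiusLoo {d N : ℕ} (k : ℕ) (xs : Fin N → (Fin d → ℝ)) (i : Fin N) : ℝ :=
  sInf {r : ℝ | 0 ≤ r ∧ k ≤ (Finset.univ.filter (fun j => j ≠ i ∧ dist (xs i) (xs j) ≤ r)).card}

/-- `ε_i`: twice the leave-one-out `k`-NN distance of sample `i`. -/
def epsKL {d N : ℕ} (k : ℕ) (xs : Fin N → (Fin d → ℝ)) (i : Fin N) : ℝ :=
  2 * kNNradiusLoo k xs i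

/-- `ξ_{i,j} = min(x_j^{(i)} + ε_i/2, 1) - max(x_j^{(i)} - ε_i/2, 0)`. -/
def xiTKL {d N : ℕ} (k : ℕ) (xs : Fin N → (Fin d → ℝ)) (i : Fin N) (j : Fin d) : ℝ :=
  min (xs i j + epsKL k xs i / 2) 1 - max (xs i j - epsKL k xs i / 2) 0

/-- The truncated Kozachenko-Leonenko estimator. -/
def tKL {d N : ℕ} (k : ℕ) (xs : Fin N → (Fin d → ℝ)) : ℝ :=
  - digamma k + digamma N + (1 / (N:ℝ)) * ∑ i : Fin N, ∑ j : Fin d, Real.log (xiTKL k xs i j)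

/-- `ε_{i,j}`: twice the largest coordinate-`j` distance from `xs i` over its `k`
nearest neighbors (in sup-norm) among the other samples. -/
def epsKSG {d N : ℕ} (k : ℕ) (xs : Fin N → (Fin d → ℝ)) (i : Fin N) (j : Fin d) : ℝ :=
  2 * sSup {t : ℝ | ∃ l : Fin N, l ≠ i ∧ dist (xs i) (xs l) ≤ kNNradiusLoo k xs i ∧ t = |xs i j - xs l j|}

/-- `ζ_{i,j} = min(x_j^{(i)} + ε_{i,j}/2, 1) - max(x_j^{(i)} - ε_{i,j}/2, 0)`. -/
def zetaTKSG {d N : ℕ} (k : ℕ) (xs : Fin N → (Fin d → ℝ)) (i : Fin N) (j : Fin d) : ℝ :=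
  min (xs i j + epsKSG k xs i j / 2) 1 - max (xs i j - epsKSG k xs i j / 2) 0

/-- The truncated KSG estimator. -/
def tKSG {d N : ℕ} (k : ℕ) (xs : Fin N → (Fin d → ℝ)) : ℝ :=
  - digamma k + digamma N + ((d:ℝ) - 1) / k
    + (1 / (N:ℝ)) * ∑ i : Fin N, ∑ j : Fin d, Real.log (zetaTKSG k xs i j)

/-- The rectangular (coordinate-wise) twice-`k`-NN distance `ε_k^{x_j}(x)` of a query
point `x`: twice the largest coordinate-`j` distance from `x` over its `k` nearest
neighbors (in the sup-norm) among the samples `s`. -/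
def epsRect {d m : ℕ} (k : ℕ) (x : Fin d → ℝ) (s : Fin m → (Fin d → ℝ)) (j : Fin d) : ℝ :=
  2 * sSup {t : ℝ | ∃ i : Fin m, dist x (s i) ≤ kNNradius k x s ∧ t = |x j - s i j|}

/-- The open axis-aligned rectangle `B(x; r_1, ..., r_d)`. -/
def rect {d : ℕ} (x r : Fin d → ℝ) : Set (Fin d → ℝ) := {x' | ∀ j, |x' j - x j| < r j}

/-- The truncated interval length `min(x_j + r/2, 1) - max(x_j - r/2, 0)`. -/
def truncLen {d : ℕ} (x : Fin d → ℝ) (r : ℝ) (j : Fin d) : ℝ :=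
  min (x j + r / 2) 1 - max (x j - r / 2) 0

/-- The indicator `1_j`: equals `1` if `[x_j - r_j/2, x_j + r_j/2]` extends beyond
`[0,1]` and `0` otherwise. -/
def indBeyond {d : ℕ} (x r : Fin d → ℝ) (j : Fin d) : ℕ :=
  if x j - r j / 2 < 0 ∨ 1 < x j + r j / 2 then 1 else 0

/-- The partial derivative of `f : (Fin d → ℝ) → ℝ` in coordinate `j`. -/
def pderiv {d : ℕ} (j : Fin d) (f : (Fin d → ℝ) → ℝ) : (Fin d → ℝ) → ℝ :=
  fun r => deriv (fun t => f (Function.update r j t)) (r j)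

/-- Iterated mixed partial derivative along a list of coordinates. -/
def mixedPartial {d : ℕ} (l : List (Fin d)) (f : (Fin d → ℝ) → ℝ) : (Fin d → ℝ) → ℝ :=
  l.foldr pderiv f

lemma deriv_Gamma_add_one {x : ℝ} (hx : 0 < x) :
    deriv Real.Gamma (x + 1) = Real.Gamma x + x * deriv Real.Gamma x := by
  have hdiff : ∀ y : ℝ, 0 < y → DifferentiableAt ℝ Real.Gamma y := by
    intro y hy
    refine Real.differentiableAt_Gamma (fun m => ?_)
    have : (0:ℝ) ≤ m := Nat.cast_nonneg m
    exact (lt_of_le_of_lt (by linarith) hy).ne'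
  have hev : (fun y => Real.Gamma (y + 1)) =ᶠ[𝓝 x] fun y => y * Real.Gamma y := by
    filter_upwards [eventually_gt_nhds hx] with y hy
    exact Real.Gamma_add_one hy.ne'
  have h2 : HasDerivAt (fun y : ℝ => y * Real.Gamma y)
      (1 * Real.Gamma x + x * deriv Real.Gamma x) x :=
    (hasDerivAt_id x).mul ((hdiff x hx).hasDerivAt)
  have h1 : HasDerivAt (fun y : ℝ => Real.Gamma (y + 1)) (deriv Real.Gamma (x + 1)) x := by
    have := ((hdiff (x + 1) (by linarith)).hasDerivAt).comp x
      ((hasDerivAt_id x).add_const 1)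
    rw [mul_one] at this
    exact this
  have heq := (h2.congr_of_eventuallyEq hev).unique h1
  rw [← heq]; ring

lemma digamma_add_one {x : ℝ} (hx : 0 < x) : digamma (x + 1) = digamma x + 1 / x := by
  have hG : Real.Gamma x ≠ 0 := (Real.Gamma_pos_of_pos hx).ne'
  unfold digamma
  rw [deriv_Gamma_add_one hx, Real.Gamma_add_one hx.ne']
  field_simp
  ring

lemma digamma_nat_sub {k N : ℕ} (hk : 1 ≤ k) (hkN : k ≤ N) :
    digamma N - digamma k = ∑ j ∈ Finset.Ico k N, (1:ℝ) / j := by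
  induction N, hkN using Nat.le_induction with
  | base => simp
  | succ n hn ih =>
    have hn0 : 0 < (n : ℝ) := by exact_mod_cast lt_of_lt_of_le hk hn
    have : digamma (n + 1 : ℕ) = digamma n + 1 / n := by
      push_cast
      exact digamma_add_one hn0
    rw [this, Finset.sum_Ico_succ_top hn]
    linarith [ih]

lemma beta_nat (a b : ℕ) :
    ∫ x in (0:ℝ)..1, x ^ a * (1 - x) ^ b
      = (a.factorial * b.factorial : ℝ) / (a + b + 1).factorial := by
  have key := Complex.Gamma_mul_Gamma_eq_betaIntegral
    (s := (a:ℂ) + 1) (t := (b:ℂ) + 1) (by simp [Complex.add_re]; positivity) (by simp [Complex.add_re]; positivity)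
  have hbeta : Complex.betaIntegral ((a:ℂ) + 1) ((b:ℂ) + 1)
      = ((∫ x in (0:ℝ)..1, x ^ a * (1 - x) ^ b : ℝ) : ℂ) := by
    rw [Complex.betaIntegral]
    rw [← intervalIntegral.integral_ofReal]
    apply intervalIntegral.integral_congr
    intro x _
    dsimp only
    have h1 : ((a:ℂ) + 1 - 1) = ((a : ℕ) : ℂ) := by ring
    have h2 : ((b:ℂ) + 1 - 1) = ((b : ℕ) : ℂ) := by ring
    rw [h1, h2, Complex.cpow_natCast, Complex.cpow_natCast]
    push_cast
    ring
  have hfac : Complex.Gamma ((a:ℂ) + 1) = (a.factorial : ℂ) := Complex.Gamma_nat_eq_factorial a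
  have hfac2 : Complex.Gamma ((b:ℂ) + 1) = (b.factorial : ℂ) := Complex.Gamma_nat_eq_factorial b
  have hsum : ((a:ℂ) + 1 + ((b:ℂ) + 1)) = ((a + b + 1 : ℕ) : ℂ) + 1 := by push_cast; ring
  rw [hbeta, hfac, hfac2, hsum, Complex.Gamma_nat_eq_factorial] at key
  have hne : ((a + b + 1).factorial : ℂ) ≠ 0 := by exact_mod_cast (a+b+1).factorial_ne_zero
  have goalC : ((∫ x in (0:ℝ)..1, x ^ a * (1 - x) ^ b : ℝ) : ℂ) * ((a+b+1).factorial : ℂ)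
      = (a.factorial : ℂ) * (b.factorial : ℂ) := by
    linear_combination -key
  have goalR : (∫ x in (0:ℝ)..1, x ^ a * (1 - x) ^ b) * ((a+b+1).factorial : ℝ)
      = (a.factorial : ℝ) * (b.factorial : ℝ) := by exact_mod_cast goalC
  have hne' : ((a+b+1).factorial : ℝ) ≠ 0 := by exact_mod_cast (a+b+1).factorial_ne_zero
  rw [eq_div_iff hne']
  linarith [goalR]

section OrderStat

variable {m k : ℕ} (D : Fin m → ℝ)

def cnt (r : ℝ) : ℕ := (Finset.univ.filter (fun i => D i ≤ r)).card

lemma cnt_mono {r r' : ℝ} (h : r ≤ r') : cnt D r ≤ cnt D r' := by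
  apply Finset.card_le_card
  intro i hi
  rw [Finset.mem_filter] at hi ⊢
  exact ⟨hi.1, le_trans hi.2 h⟩

variable (hD : ∀ i, 0 ≤ D i) (hk : 1 ≤ k) (hkm : k ≤ m)

def rho : ℝ := sInf {r : ℝ | 0 ≤ r ∧ k ≤ cnt D r}

include hD hk hkm

lemma rho_spec : 0 ≤ rho (k := k) D ∧ k ≤ cnt D (rho (k := k) D) := by
  have hm : 0 < m := lt_of_lt_of_le hk hkm
  haveI : Nonempty (Fin m) := ⟨⟨0, hm⟩⟩
  set V : Set ℝ := {r : ℝ | 0 ≤ r ∧ k ≤ cnt D r} with hV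
  have hne : V.Nonempty := by
    refine ⟨Finset.univ.sup' Finset.univ_nonempty D, ?_, ?_⟩
    · exact le_trans (hD ⟨0, hm⟩) (Finset.le_sup' D (Finset.mem_univ _))
    · have : (Finset.univ.filter (fun i => D i ≤ Finset.univ.sup' Finset.univ_nonempty D)) = Finset.univ := by
        refine Finset.filter_true_of_mem (fun i _ => Finset.le_sup' D (Finset.mem_univ i))
      rw [cnt, this, Finset.card_univ, Fintype.card_fin]
      exact hkm
  have hbdd : BddBelow V := ⟨0, fun r hr => hr.1⟩
  have hρ0 : 0 ≤ rho (k := k) D := le_csInf hne (fun r hr => hr.1)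
  refine ⟨hρ0, ?_⟩
  by_contra hcnt
  push_neg at hcnt
  set ρ := rho (k := k) D
  have hTne : (Finset.univ.filter (fun i => ρ < D i)).Nonempty := by
    by_contra hT
    rw [Finset.not_nonempty_iff_eq_empty, Finset.filter_eq_empty_iff] at hT
    have : (Finset.univ.filter (fun i => D i ≤ ρ)) = Finset.univ :=
      Finset.filter_true_of_mem (fun i _ => le_of_not_gt (hT (Finset.mem_univ i)))
    have : m ≤ cnt D ρ := by rw [cnt, this, Finset.card_univ, Fintype.card_fin]
    omega
  set δ := (Finset.univ.filter (fun i => ρ < D i)).inf' hTne D with hδ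
  have hρδ : ρ < δ := by
    rw [hδ, Finset.lt_inf'_iff]
    intro i hi
    exact (Finset.mem_filter.1 hi).2
  obtain ⟨r, hrV, hrδ⟩ := (csInf_lt_iff hbdd hne).1 hρδ
  have hρr : ρ ≤ r := csInf_le hbdd hrV
  have : cnt D r ≤ cnt D ρ := by
    apply Finset.card_le_card
    intro i hi
    rw [Finset.mem_filter] at hi ⊢
    refine ⟨Finset.mem_univ _, ?_⟩
    by_contra hiρ
    push_neg at hiρ
    have : δ ≤ D i := Finset.inf'_le D (Finset.mem_filter.2 ⟨Finset.mem_univ _, hiρ⟩)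
    linarith [hi.2]
  have := hrV.2
  omega

lemma rho_le_iff {r : ℝ} : rho (k := k) D ≤ r ↔ (0 ≤ r ∧ k ≤ cnt D r) := by
  constructor
  · intro h
    obtain ⟨h0, hc⟩ := rho_spec D hD hk hkm
    exact ⟨le_trans h0 h, le_trans hc (cnt_mono D h)⟩
  · intro h
    exact csInf_le ⟨0, fun r' hr' => hr'.1⟩ h

end OrderStat

section MeasureFacts

variable {d : ℕ}

lemma hyperplane_null (j : Fin d) (c : ℝ) :
    volume {y : Fin d → ℝ | y j = c} = 0 := by
  have hset : {y : Fin d → ℝ | y j = c}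
      = Set.univ.pi (fun i => if i = j then ({c} : Set ℝ) else Set.univ) := by
    ext y
    simp only [Set.mem_setOf_eq, Set.mem_pi, Set.mem_univ, forall_true_left]
    constructor
    · intro h i
      by_cases hij : i = j
      · subst hij; simp [h]
      · simp [hij]
    · intro h
      have := h j
      simpa using this
  rw [hset, volume_pi, Measure.pi_pi]
  apply Finset.prod_eq_zero (Finset.mem_univ j)
  simp

lemma sphere_null (hd : 1 ≤ d) (P : Measure (Fin d → ℝ))
    (g : (Fin d → ℝ) → ℝ≥0∞) (hP : P = volume.withDensity g)
    (x : Fin d → ℝ) (r : ℝ) : P (Metric.sphere x r) = 0 := by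
  have hsub : Metric.sphere x r ⊆
      ⋃ j : Fin d, ({y : Fin d → ℝ | y j = x j + r} ∪ {y : Fin d → ℝ | y j = x j - r}) := by
    intro y hy
    have hdist : dist y x = r := hy
    haveI : Nonempty (Fin d) := ⟨⟨0, hd⟩⟩
    obtain ⟨j, -, hj⟩ := Finset.exists_mem_eq_sup' (Finset.univ_nonempty (α := Fin d))
      (fun i => nndist (y i) (x i))
    have hdj : dist (y j) (x j) = r := by
      have : dist y x = ↑(Finset.univ.sup' Finset.univ_nonempty fun i => nndist (y i) (x i)) := by
        rw [dist_pi_def]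
        congr 1
        rw [Finset.sup'_eq_sup]
      rw [this, hj] at hdist
      exact_mod_cast hdist
    have hr0 : 0 ≤ r := by rw [← hdist]; exact dist_nonneg
    rw [Real.dist_eq, abs_eq hr0] at hdj
    apply Set.mem_iUnion.2 ⟨j, ?_⟩
    rcases hdj with h | h
    · left; simp only [Set.mem_setOf_eq]; linarith
    · right; simp only [Set.mem_setOf_eq]; linarith
  have hvol : volume (Metric.sphere x r) = 0 := by
    refine measure_mono_null hsub ?_
    refine measure_iUnion_null (fun j => ?_)
    exact measure_union_null (hyperplane_null j _) (hyperplane_null j _)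
  rw [hP]
  exact (withDensity_absolutelyContinuous volume g) hvol

lemma closedBall_eq_ball {d : ℕ} (P : Measure (Fin d → ℝ)) (x : Fin d → ℝ) (r : ℝ)
    (hsph : P (Metric.sphere x r) = 0) :
    P (Metric.closedBall x r) = P (Metric.ball x r) := by
  apply le_antisymm
  · calc P (Metric.closedBall x r) ≤ P (Metric.ball x r ∪ Metric.sphere x r) := by
          apply measure_mono
          intro y hy
          rcases lt_or_eq_of_le (Metric.mem_closedBall.1 hy) with h | h
          · exact Or.inl h
          · exact Or.inr h
        _ ≤ P (Metric.ball x r) + P (Metric.sphere x r) := measure_union_le _ _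
        _ = P (Metric.ball x r) := by rw [hsph, add_zero]
  · exact measure_mono Metric.ball_subset_closedBall

end MeasureFacts

section CDF

variable {α : Type*} [MetricSpace α] [MeasurableSpace α] [OpensMeasurableSpace α]
  (P : Measure α) [IsProbabilityMeasure P] (x : α)

def Fcdf (r : ℝ) : ℝ := (P (Metric.closedBall x r)).toReal

lemma Fcdf_def (r : ℝ) : Fcdf P x r = (P (Metric.closedBall x r)).toReal := rfl

lemma Fcdf_mono : Monotone (Fcdf P x) := fun r r' h =>
  ENNReal.toReal_mono (measure_ne_top P _)
    (measure_mono (Metric.closedBall_subset_closedBall h))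

lemma Fcdf_nonneg (r : ℝ) : 0 ≤ Fcdf P x r := ENNReal.toReal_nonneg

lemma Fcdf_le_one (r : ℝ) : Fcdf P x r ≤ 1 := by
  have h := measure_mono (μ := P) (Set.subset_univ (Metric.closedBall x r))
  rw [measure_univ] at h
  have := ENNReal.toReal_mono (by simp) h
  simpa [Fcdf] using this

lemma Fcdf_measurable : Measurable (Fcdf P x) := (Fcdf_mono P x).measurable

lemma aux_antitone : Antitone (fun n : ℕ => (1 : ℝ) / (n + 1)) := by
  intro a b hab
  apply one_div_le_one_div_of_le
  · positivity
  · exact_mod_cast Nat.succ_le_succ hab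

lemma tendsto_cb_right (t : ℝ) :
    Tendsto (fun n : ℕ => P (Metric.closedBall x (t + 1/(n+1)))) atTop
      (𝓝 (P (Metric.closedBall x t))) := by
  have hInter : ⋂ n : ℕ, Metric.closedBall x (t + 1/(n+1)) = Metric.closedBall x t := by
    ext y
    simp only [Set.mem_iInter, Metric.mem_closedBall]
    constructor
    · intro h
      by_contra hlt
      push_neg at hlt
      obtain ⟨n, hn⟩ := exists_nat_one_div_lt (sub_pos.2 hlt)
      have := h n
      push_cast at this hn
      linarith
    · intro h n
      have : (0:ℝ) < 1/(n+1) := by positivity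
      linarith
  have := tendsto_measure_iInter_atTop (μ := P)
    (s := fun n : ℕ => Metric.closedBall x (t + 1/(n+1)))
    (fun n => Metric.isClosed_closedBall.measurableSet.nullMeasurableSet)
    (fun a b hab => Metric.closedBall_subset_closedBall (by linarith [aux_antitone hab]))
    ⟨0, measure_ne_top P _⟩
  rwa [hInter] at this

lemma tendsto_cb_left (t : ℝ) :
    Tendsto (fun n : ℕ => P (Metric.closedBall x (t - 1/(n+1)))) atTop
      (𝓝 (P (Metric.ball x t))) := by
  have hUnion : ⋃ n : ℕ, Metric.closedBall x (t - 1/(n+1)) = Metric.ball x t := by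
    ext y
    simp only [Set.mem_iUnion, Metric.mem_closedBall, Metric.mem_ball]
    constructor
    · rintro ⟨n, hn⟩
      have : (0:ℝ) < 1/(n+1) := by positivity
      linarith
    · intro h
      obtain ⟨n, hn⟩ := exists_nat_one_div_lt (sub_pos.2 h)
      exact ⟨n, by push_cast at hn ⊢; linarith⟩
  have := tendsto_measure_iUnion_atTop (μ := P)
    (s := fun n : ℕ => Metric.closedBall x (t - 1/(n+1)))
    (fun a b hab => Metric.closedBall_subset_closedBall (by linarith [aux_antitone hab]))
  rwa [hUnion] at this

lemma tendsto_cb_univ :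
    Tendsto (fun n : ℕ => P (Metric.closedBall x n)) atTop (𝓝 1) := by
  have hUnion : ⋃ n : ℕ, Metric.closedBall x n = Set.univ := by
    ext y
    simp only [Set.mem_iUnion, Metric.mem_closedBall, Set.mem_univ, iff_true]
    obtain ⟨n, hn⟩ := exists_nat_ge (dist y x)
    exact ⟨n, hn⟩
  have := tendsto_measure_iUnion_atTop (μ := P)
    (s := fun n : ℕ => Metric.closedBall x n)
    (fun a b hab => Metric.closedBall_subset_closedBall (by exact_mod_cast hab))
  rwa [hUnion, measure_univ] at this

lemma exists_quantile (hsph : ∀ r, P (Metric.sphere x r) = 0) {u : ℝ} (hu : u ∈ Set.Ioo (0:ℝ) 1) :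
    ∃ t : ℝ, P (Metric.closedBall x t) = ENNReal.ofReal u ∧
      ∀ r, (Fcdf P x r ≤ u ↔ r ≤ t) := by
  obtain ⟨hu0, hu1⟩ := hu
  set S : Set ℝ := {r | Fcdf P x r ≤ u} with hS
  have hneg : (-1 : ℝ) ∈ S := by
    simp only [hS, Set.mem_setOf_eq, Fcdf]
    rw [Metric.closedBall_eq_empty.2 (by norm_num : (-1:ℝ) < 0)]
    simp [hu0.le]
  have hne : S.Nonempty := ⟨-1, hneg⟩
  -- bounded above
  have hlt1 : ENNReal.ofReal u < 1 := ENNReal.ofReal_lt_one.2 hu1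
  have hev : ∀ᶠ n : ℕ in atTop, ENNReal.ofReal u < P (Metric.closedBall x n) :=
    (tendsto_cb_univ P x).eventually_const_lt hlt1
  obtain ⟨n, hn⟩ := hev.exists
  have hbdd : BddAbove S := by
    refine ⟨n, fun r hr => ?_⟩
    by_contra hrn
    push_neg at hrn
    have h1 : P (Metric.closedBall x (n:ℝ)) ≤ P (Metric.closedBall x r) :=
      measure_mono (Metric.closedBall_subset_closedBall hrn.le)
    have h2 : P (Metric.closedBall x r) ≤ ENNReal.ofReal u :=
      (ENNReal.le_ofReal_iff_toReal_le (measure_ne_top P _) hu0.le).2 hr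
    exact absurd (le_trans h1 h2) (not_le.2 hn)
  set t := sSup S with ht
  have hball_le : P (Metric.ball x t) ≤ ENNReal.ofReal u := by
    refine le_of_tendsto (tendsto_cb_left P x t) (Eventually.of_forall fun n => ?_)
    have hlt : t - 1/(n+1) < t := by
      have : (0:ℝ) < 1/(n+1) := by positivity
      linarith
    obtain ⟨r, hrS, hrlt⟩ := exists_lt_of_lt_csSup hne hlt
    calc P (Metric.closedBall x (t - 1/(n+1))) ≤ P (Metric.closedBall x r) :=
          measure_mono (Metric.closedBall_subset_closedBall hrlt.le)
      _ ≤ ENNReal.ofReal u :=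
          (ENNReal.le_ofReal_iff_toReal_le (measure_ne_top P _) hu0.le).2 hrS
  have hcb_ge : ENNReal.ofReal u ≤ P (Metric.closedBall x t) := by
    refine ge_of_tendsto (tendsto_cb_right P x t) (Eventually.of_forall fun n => ?_)
    have hpos : (0:ℝ) < 1/(n+1) := by positivity
    have hnotS : t + 1/(n+1) ∉ S := fun hmem => by
      have := le_csSup hbdd hmem
      linarith
    have : u < Fcdf P x (t + 1/(n+1)) := by
      simp only [hS, Set.mem_setOf_eq, not_le] at hnotS
      exact hnotS
    exact ENNReal.ofReal_le_of_le_toReal this.le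
  have hcb_eq : P (Metric.closedBall x t) = ENNReal.ofReal u := by
    have heq : P (Metric.closedBall x t) = P (Metric.ball x t) := by
      apply le_antisymm
      · calc P (Metric.closedBall x t) ≤ P (Metric.ball x t ∪ Metric.sphere x t) := by
              apply measure_mono
              intro y hy
              rcases lt_or_eq_of_le (Metric.mem_closedBall.1 hy) with h | h
              · exact Or.inl h
              · exact Or.inr h
            _ ≤ P (Metric.ball x t) + P (Metric.sphere x t) := measure_union_le _ _
            _ = P (Metric.ball x t) := by rw [hsph, add_zero]
      · exact measure_mono Metric.ball_subset_closedBall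
    exact le_antisymm (heq ▸ hball_le) hcb_ge
  refine ⟨t, hcb_eq, fun r => ?_⟩
  constructor
  · intro hr
    exact le_csSup hbdd hr
  · intro hr
    have h1 : Fcdf P x r ≤ Fcdf P x t := Fcdf_mono P x hr
    have h2 : Fcdf P x t = u := by
      rw [Fcdf, hcb_eq, ENNReal.toReal_ofReal hu0.le]
    linarith

end CDF

section Binomial

variable {α : Type*} [MeasurableSpace α] (P : Measure α) [IsProbabilityMeasure P]
  {m k : ℕ} {A : Set α}

def boxSet (A : Set α) (S : Finset (Fin m)) : Set (Fin m → α) :=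
  Set.univ.pi (fun i => if i ∈ S then A else Aᶜ)

lemma boxSet_meas (hA : MeasurableSet A) (S : Finset (Fin m)) :
    MeasurableSet (boxSet A S) := by
  apply MeasurableSet.univ_pi
  intro i
  by_cases h : i ∈ S <;> simp [h, hA, hA.compl]

lemma boxSet_measure (hA : MeasurableSet A) (S : Finset (Fin m)) :
    Measure.pi (fun _ : Fin m => P) (boxSet A S)
      = (P A) ^ S.card * (1 - P A) ^ (m - S.card) := by
  rw [boxSet, Measure.pi_pi]
  have h1 : ∀ i : Fin m, P (if i ∈ S then A else Aᶜ) = if i ∈ S then P A else 1 - P A := by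
    intro i
    by_cases h : i ∈ S
    · simp [h]
    · simp [h, prob_compl_eq_one_sub hA]
  simp_rw [h1]
  rw [← Finset.prod_mul_prod_compl S]
  rw [Finset.prod_congr rfl (fun i hi => if_pos hi),
      Finset.prod_congr rfl (fun i hi => if_neg (Finset.mem_compl.1 hi))]
  rw [Finset.prod_const, Finset.prod_const, Finset.card_compl, Fintype.card_fin]

lemma mem_boxSet_iff {S : Finset (Fin m)} {s : Fin m → α} (hs : s ∈ boxSet A S) :
    ∀ i, (i ∈ S ↔ s i ∈ A) := by
  intro i
  have := hs i (Set.mem_univ i)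
  by_cases h : i ∈ S
  · simp only [h, if_pos] at this
    simp [h, this]
  · simp only [h, if_neg, not_false_iff] at this
    simp [h]
    exact this

lemma count_event_eq_biUnion :
    {s : Fin m → α | k ≤ (Finset.univ.filter (fun i => s i ∈ A)).card}
      = ⋃ S ∈ Finset.univ.filter (fun S : Finset (Fin m) => k ≤ S.card), boxSet A S := by
  ext s
  simp only [Set.mem_setOf_eq, Set.mem_iUnion, Finset.mem_filter, Finset.mem_univ, true_and,
    exists_prop]
  constructor
  · intro h
    refine ⟨Finset.univ.filter (fun i => s i ∈ A), h, ?_⟩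
    intro i _
    by_cases hi : s i ∈ A <;> simp [hi]
  · rintro ⟨S, hS, hbox⟩
    refine le_trans hS (Finset.card_le_card ?_)
    intro i hi
    rw [Finset.mem_filter]
    exact ⟨Finset.mem_univ _, (mem_boxSet_iff hbox i).1 hi⟩

lemma count_event_measure (hA : MeasurableSet A) (hkm : k ≤ m) :
    Measure.pi (fun _ : Fin m => P)
        {s : Fin m → α | k ≤ (Finset.univ.filter (fun i => s i ∈ A)).card}
      = ∑ j ∈ Finset.Icc k m, (m.choose j : ℝ≥0∞) * (P A) ^ j * (1 - P A) ^ (m - j) := by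
  rw [count_event_eq_biUnion]
  rw [measure_biUnion_finset ?hd (fun S _ => boxSet_meas hA S)]
  case hd =>
    intro S hS S' hS' hne
    simp only [Function.onFun]
    rw [Set.disjoint_left]
    intro s hs hs'
    apply hne
    ext i
    rw [mem_boxSet_iff hs i, ← mem_boxSet_iff hs' i]
  · simp_rw [boxSet_measure P hA]
    rw [Finset.sum_filter]
    rw [← Finset.powerset_univ]
    rw [Finset.sum_powerset]
    have hinner : ∀ j ∈ Finset.range ((Finset.univ : Finset (Fin m)).card + 1),
        (∑ S ∈ Finset.powersetCard j (Finset.univ : Finset (Fin m)),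
          if k ≤ S.card then (P A) ^ S.card * (1 - P A) ^ (m - S.card) else 0)
        = (m.choose j : ℝ≥0∞) * (if k ≤ j then (P A) ^ j * (1 - P A) ^ (m - j) else 0) := by
      intro j _
      have := Finset.sum_powersetCard j (Finset.univ : Finset (Fin m))
        (fun c => if k ≤ c then (P A) ^ c * (1 - P A) ^ (m - c) else 0)
      rw [this, Finset.card_univ, Fintype.card_fin, nsmul_eq_mul]
    rw [Finset.sum_congr rfl hinner]
    rw [Finset.card_univ, Fintype.card_fin]
    have hmove : ∀ j : ℕ, (m.choose j : ℝ≥0∞) * (if k ≤ j then (P A) ^ j * (1 - P A) ^ (m - j) else 0)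
        = if k ≤ j then (m.choose j : ℝ≥0∞) * (P A) ^ j * (1 - P A) ^ (m - j) else 0 := by
      intro j
      by_cases h : k ≤ j <;> simp [h, mul_assoc]
    simp_rw [hmove]
    rw [← Finset.sum_filter]
    congr 1
    ext j
    simp only [Finset.mem_filter, Finset.mem_range, Finset.mem_Icc]
    omega

end Binomial

lemma log_eq_lintegral {y : ℝ} (hy0 : 0 < y) (hy1 : y ≤ 1) :
    (∫⁻ u in Set.Ioo (0:ℝ) 1, (if y ≤ u then ENNReal.ofReal (1/u) else 0))
      = ENNReal.ofReal (-Real.log y) := by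
  have hind : ∀ u : ℝ, (if y ≤ u then ENNReal.ofReal (1/u) else 0)
      = (Set.Ici y).indicator (fun u => ENNReal.ofReal (1/u)) u := by
    intro u
    rw [Set.indicator_apply]
    simp [Set.mem_Ici]
  simp_rw [hind]
  rw [lintegral_indicator measurableSet_Ici, Measure.restrict_restrict measurableSet_Ici]
  have hset : Set.Ici y ∩ Set.Ioo 0 1 = Set.Ico y 1 := by
    ext u
    simp only [Set.mem_inter_iff, Set.mem_Ici, Set.mem_Ioo, Set.mem_Ico]
    constructor
    · rintro ⟨h1, _, h3⟩; exact ⟨h1, h3⟩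
    · rintro ⟨h1, h2⟩; exact ⟨h1, lt_of_lt_of_le hy0 h1, h2⟩
  rw [hset, Measure.restrict_congr_set Ico_ae_eq_Ioc]
  have hint : IntegrableOn (fun u : ℝ => 1/u) (Set.Ioc y 1) := by
    apply IntegrableOn.mono_set (t := Set.Icc y 1)
    · apply ContinuousOn.integrableOn_Icc
      apply ContinuousOn.div continuousOn_const continuousOn_id
      intro u hu
      exact ne_of_gt (lt_of_lt_of_le hy0 hu.1)
    · exact Set.Ioc_subset_Icc_self
  rw [← ofReal_integral_eq_lintegral_ofReal hint]
  · rw [← intervalIntegral.integral_of_le hy1]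
    rw [integral_one_div]
    · rw [one_div, Real.log_inv]
    · intro h0
      rw [Set.mem_uIcc] at h0
      rcases h0 with ⟨h1, _⟩ | ⟨_, h2⟩ <;> linarith
  · filter_upwards [ae_restrict_mem measurableSet_Ioc] with u hu
    exact le_of_lt (one_div_pos.2 (lt_trans hy0 hu.1))

lemma term_integral {j m : ℕ} (hj : 1 ≤ j) (hjm : j ≤ m) :
    (∫⁻ u in Set.Ioo (0:ℝ) 1,
        ENNReal.ofReal (1/u) * ((m.choose j : ℝ≥0∞) * (ENNReal.ofReal u) ^ j
          * (ENNReal.ofReal (1-u)) ^ (m - j)))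
      = ENNReal.ofReal (1/j) := by
  have hcong : ∀ u ∈ Set.Ioo (0:ℝ) 1,
      ENNReal.ofReal (1/u) * ((m.choose j : ℝ≥0∞) * (ENNReal.ofReal u) ^ j
          * (ENNReal.ofReal (1-u)) ^ (m - j))
        = (m.choose j : ℝ≥0∞) * ENNReal.ofReal (u ^ (j-1) * (1-u) ^ (m-j)) := by
    intro u hu
    obtain ⟨hu0, hu1⟩ := hu
    have h1u : (0:ℝ) ≤ 1 - u := by linarith
    have e1 : (1/u) * (u^j * (1-u)^(m-j)) = u^(j-1) * (1-u)^(m-j) := by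
      have : u ^ j = u * u ^ (j - 1) := by
        conv_lhs => rw [show j = (j-1) + 1 by omega]
        ring
      rw [this]
      field_simp
    calc ENNReal.ofReal (1/u) * ((m.choose j : ℝ≥0∞) * (ENNReal.ofReal u) ^ j
          * (ENNReal.ofReal (1-u)) ^ (m - j))
        = (m.choose j : ℝ≥0∞) * (ENNReal.ofReal (1/u)
            * (ENNReal.ofReal (u^j) * ENNReal.ofReal ((1-u)^(m-j)))) := by
          rw [← ENNReal.ofReal_pow hu0.le, ← ENNReal.ofReal_pow h1u]
          ring
      _ = (m.choose j : ℝ≥0∞) * ENNReal.ofReal ((1/u) * (u^j * (1-u)^(m-j))) := by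
          rw [← ENNReal.ofReal_mul (by positivity), ← ENNReal.ofReal_mul (by positivity)]
      _ = (m.choose j : ℝ≥0∞) * ENNReal.ofReal (u ^ (j-1) * (1-u) ^ (m-j)) := by rw [e1]
  rw [setLIntegral_congr_fun measurableSet_Ioo hcong]
  rw [lintegral_const_mul]
  swap
  · apply Measurable.ennreal_ofReal
    apply Measurable.mul
    · exact (measurable_id.pow_const _)
    · exact ((measurable_const.sub measurable_id).pow_const _)
  have hint : IntegrableOn (fun u : ℝ => u ^ (j-1) * (1-u) ^ (m-j)) (Set.Ioo 0 1) := by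
    apply IntegrableOn.mono_set (t := Set.Icc 0 1)
    · apply ContinuousOn.integrableOn_Icc
      exact ((continuous_pow _).comp continuous_id).continuousOn.mul
        (((continuous_const.sub continuous_id).pow _).continuousOn)
    · exact Set.Ioo_subset_Icc_self
  rw [← ofReal_integral_eq_lintegral_ofReal hint]
  swap
  · filter_upwards [ae_restrict_mem measurableSet_Ioo] with u hu
    exact mul_nonneg (pow_nonneg hu.1.le _) (pow_nonneg (by linarith [hu.2]) _)
  have hval : (∫ u in Set.Ioo (0:ℝ) 1, u ^ (j-1) * (1-u) ^ (m-j))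
      = ((j-1).factorial * (m-j).factorial : ℝ) / m.factorial := by
    rw [← integral_Ioc_eq_integral_Ioo, ← intervalIntegral.integral_of_le (by norm_num)]
    rw [beta_nat (j-1) (m-j), show (j-1) + (m-j) + 1 = m by omega]
  rw [hval]
  rw [← ENNReal.ofReal_natCast, ← ENNReal.ofReal_mul (by positivity)]
  congr 1
  have hnat : m.choose j * j.factorial * (m-j).factorial = m.factorial :=
    Nat.choose_mul_factorial_mul_factorial hjm
  have hjfac : j.factorial = j * (j-1).factorial := by
    conv_lhs => rw [show j = (j-1) + 1 by omega]
    rw [Nat.factorial_succ]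
    congr 1
    omega
  have hj0 : (0:ℝ) < j := by exact_mod_cast hj
  have hm0 : (0:ℝ) < m.factorial := by exact_mod_cast m.factorial_pos
  have hcast : (m.choose j : ℝ) * (j * (j-1).factorial) * (m-j).factorial = m.factorial := by
    exact_mod_cast hjfac ▸ hnat
  rw [mul_div_assoc'] at *
  rw [div_eq_div_iff hm0.ne' hj0.ne']
  linear_combination hcast


/-- Lemma 1: for a query point `x` in the support of the continuous density `p` of `P`,
the mass `p_{ε_k(x)}(x)` of the sup-norm ball of radius `ε_k(x)/2` around `x`, where
`ε_k(x)` is twice the `k`-NN distance among `N-1` i.i.d. samples from `P`, satisfies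
`E[log p_{ε_k(x)}(x)] = ψ(k) - ψ(N)`. -/
theorem knn_ball_mass_expectation {d k N : ℕ} (hd : 1 ≤ d) (hk : 1 ≤ k)
    (hN : 2 ≤ N) (hkN : k ≤ N - 1)
    (P : Measure (Fin d → ℝ)) [IsProbabilityMeasure P]
    (p : (Fin d → ℝ) → ℝ)
    (hdens : P = volume.withDensity fun x => ENNReal.ofReal (p x))
    (hcont : Continuous p)
    (x : Fin d → ℝ) (hx : x ∈ Function.support p) :
    (∫ s, Real.log ((P (Metric.ball x (twiceKNNdist k x s / 2))).toReal)
        ∂(Measure.pi fun _ : Fin (N - 1) => P))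
      = digamma k - digamma N := by
  classical
  set m := N - 1 with hmdef
  have hm1 : 1 ≤ m := by omega
  have hkm : k ≤ m := hkN
  have hsph : ∀ r, P (Metric.sphere x r) = 0 :=
    fun r => sphere_null hd P _ hdens x r
  set Pm : Measure (Fin m → (Fin d → ℝ)) := Measure.pi (fun _ => P) with hPm
  set Y : (Fin m → (Fin d → ℝ)) → ℝ := fun s => Fcdf P x (kNNradius k x s) with hYdef
  -- Step A : rewrite the integrand
  have hinteg : (fun s : Fin m → (Fin d → ℝ) =>
      Real.log ((P (Metric.ball x (twiceKNNdist k x s / 2))).toReal))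
      = fun s => Real.log (Y s) := by
    funext s
    have h2 : twiceKNNdist k x s / 2 = kNNradius k x s := by
      rw [twiceKNNdist]; ring
    rw [h2, hYdef]
    congr 1
    show (P (Metric.ball x (kNNradius k x s))).toReal = Fcdf P x (kNNradius k x s)
    rw [Fcdf_def, closedBall_eq_ball P x _ (hsph _)]
  rw [hinteg]
  -- Step B : measurability
  have hρ_meas : Measurable (fun s : Fin m → (Fin d → ℝ) => kNNradius k x s) := by
    apply measurable_of_Iic
    intro r
    by_cases hr : 0 ≤ r
    · have hAmeas : MeasurableSet {y : Fin d → ℝ | dist x y ≤ r} :=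
        measurableSet_le (continuous_const.dist continuous_id).measurable measurable_const
      have hpre : (fun s : Fin m → (Fin d → ℝ) => kNNradius k x s) ⁻¹' (Set.Iic r)
          = {s : Fin m → (Fin d → ℝ) |
              k ≤ (Finset.univ.filter (fun i => s i ∈ {y : Fin d → ℝ | dist x y ≤ r})).card} := by
        ext s
        simp only [Set.mem_preimage, Set.mem_Iic, Set.mem_setOf_eq]
        have h1 := rho_le_iff (fun i => dist x (s i)) (fun i => dist_nonneg) hk hkm (r := r)
        have h2 : kNNradius k x s = rho (k := k) (fun i => dist x (s i)) := rfl
        rw [h2, h1, cnt]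
        have hcard : (Finset.univ.filter (fun i : Fin m => dist x (s i) ≤ r))
            = (Finset.univ.filter (fun i : Fin m => s i ∈ {y : Fin d → ℝ | dist x y ≤ r})) :=
          Finset.filter_congr (fun i _ => by simp)
        rw [hcard]
        simp [hr]
      rw [hpre, count_event_eq_biUnion]
      exact (Finset.univ.filter (fun S : Finset (Fin m) => k ≤ S.card)).measurableSet_biUnion
        (fun S _ => boxSet_meas hAmeas S)
    · have hpre : (fun s : Fin m → (Fin d → ℝ) => kNNradius k x s) ⁻¹' (Set.Iic r) = ∅ := by
        ext s
        simp only [Set.mem_preimage, Set.mem_Iic, Set.mem_empty_iff_false, iff_false, not_le]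
        have h0 := (rho_spec (fun i => dist x (s i)) (fun i => dist_nonneg) hk hkm).1
        have h2 : kNNradius k x s = rho (k := k) (fun i => dist x (s i)) := rfl
        push_neg at hr
        rw [h2]
        linarith
      rw [hpre]
      exact MeasurableSet.empty
  have hYmeas : Measurable Y := (Fcdf_mono P x).measurable.comp hρ_meas
  -- Step C : distribution of Y
  have hevent : ∀ u : ℝ, u ∈ Set.Ioo (0:ℝ) 1 →
      Pm {s | Y s ≤ u} = ∑ j ∈ Finset.Icc k m,
        (m.choose j : ℝ≥0∞) * ENNReal.ofReal u ^ j * ENNReal.ofReal (1-u) ^ (m-j) := by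
    intro u hu
    obtain ⟨t, hcb, hiff⟩ := exists_quantile P x hsph hu
    set A : Set (Fin d → ℝ) := {y | dist x y ≤ t} with hA
    have hAmeas : MeasurableSet A :=
      measurableSet_le (continuous_const.dist continuous_id).measurable measurable_const
    have hPA : P A = ENNReal.ofReal u := by
      rw [← hcb]
      congr 1
      ext y
      simp [hA, Metric.mem_closedBall, dist_comm]
    have ht0 : 0 ≤ t := by
      by_contra h
      push_neg at h
      rw [Metric.closedBall_eq_empty.2 h] at hcb
      have : ENNReal.ofReal u = 0 := by simpa using hcb.symm
      rw [ENNReal.ofReal_eq_zero] at this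
      linarith [hu.1]
    have hsetY : {s : Fin m → (Fin d → ℝ) | Y s ≤ u}
        = {s | k ≤ (Finset.univ.filter (fun i => s i ∈ A)).card} := by
      ext s
      simp only [Set.mem_setOf_eq, hYdef]
      rw [hiff (kNNradius k x s)]
      have h1 := rho_le_iff (fun i => dist x (s i)) (fun i => dist_nonneg) hk hkm (r := t)
      have h2 : kNNradius k x s = rho (k := k) (fun i => dist x (s i)) := rfl
      rw [h2, h1, cnt]
      have hcard : (Finset.univ.filter (fun i : Fin m => dist x (s i) ≤ t))
          = (Finset.univ.filter (fun i : Fin m => s i ∈ A)) :=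
        Finset.filter_congr (fun i _ => by simp [hA])
      rw [hcard]
      simp [ht0]
    rw [hsetY, hPm, count_event_measure P hAmeas hkm, hPA]
    have h1mu : (1 : ℝ≥0∞) - ENNReal.ofReal u = ENNReal.ofReal (1 - u) := by
      rw [ENNReal.ofReal_sub 1 hu.1.le, ENNReal.ofReal_one]
    rw [h1mu]
  -- Step D : Y is a.e. positive
  have hYle1 : ∀ s, Y s ≤ 1 := fun s => Fcdf_le_one P x _
  have hYnn : ∀ s, 0 ≤ Y s := fun s => Fcdf_nonneg P x _
  have hY0 : Pm {s | Y s ≤ 0} = 0 := by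
    set Cst : ℝ≥0∞ := ∑ j ∈ Finset.Icc k m, (m.choose j : ℝ≥0∞) with hCst
    have hCfin : Cst ≠ ⊤ := by
      rw [hCst]
      exact (ENNReal.sum_lt_top.2 fun j _ => ENNReal.natCast_lt_top _).ne
    have hbound : ∀ n : ℕ, Pm {s | Y s ≤ 0} ≤ Cst * ENNReal.ofReal (1/(n+2)) := by
      intro n
      have hpos : (0:ℝ) < 1/(n+2) := by positivity
      have hu : (1:ℝ)/(n+2) ∈ Set.Ioo (0:ℝ) 1 := by
        refine ⟨hpos, ?_⟩
        rw [div_lt_one (by positivity)]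
        have : (0:ℝ) ≤ n := Nat.cast_nonneg n
        linarith
      have hmono : Pm {s | Y s ≤ 0} ≤ Pm {s | Y s ≤ 1/(n+2)} :=
        measure_mono (fun s hs => le_trans hs hpos.le)
      refine le_trans hmono ?_
      rw [hevent _ hu, hCst, Finset.sum_mul]
      apply Finset.sum_le_sum
      intro j hj
      rw [Finset.mem_Icc] at hj
      have hj1 : 1 ≤ j := le_trans hk hj.1
      have ha1 : ENNReal.ofReal ((1:ℝ)/(n+2)) ≤ 1 := ENNReal.ofReal_le_one.2 (by
        rw [div_le_one (by positivity)]
        have : (0:ℝ) ≤ n := Nat.cast_nonneg n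
        linarith)
      have hb1 : ENNReal.ofReal (1 - (1:ℝ)/(n+2)) ≤ 1 := ENNReal.ofReal_le_one.2 (by linarith)
      calc (m.choose j : ℝ≥0∞) * ENNReal.ofReal ((1:ℝ)/(n+2)) ^ j
            * ENNReal.ofReal (1 - (1:ℝ)/(n+2)) ^ (m-j)
          ≤ (m.choose j : ℝ≥0∞) * ENNReal.ofReal ((1:ℝ)/(n+2)) ^ 1 * 1 := by
            apply mul_le_mul'
            · exact mul_le_mul' (le_refl _) (pow_le_pow_of_le_one zero_le ha1 hj1)
            · exact pow_le_one' hb1 _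
        _ = (m.choose j : ℝ≥0∞) * ENNReal.ofReal ((1:ℝ)/(n+2)) := by rw [pow_one, mul_one]
    have htend : Tendsto (fun n : ℕ => Cst * ENNReal.ofReal (1/(n+2))) atTop (𝓝 0) := by
      have h0 : Tendsto (fun n : ℕ => (1:ℝ)/(n+2)) atTop (𝓝 0) := by
        have h := (tendsto_one_div_add_atTop_nhds_zero_nat (𝕜 := ℝ)).comp (tendsto_add_atTop_nat 1)
        convert h using 2 with n
        simp only [Function.comp_apply]
        push_cast
        ring_nf
      have h1 : Tendsto (fun n : ℕ => ENNReal.ofReal (1/(n+2))) atTop (𝓝 0) := by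
        rw [← ENNReal.ofReal_zero]
        exact (ENNReal.continuous_ofReal.tendsto 0).comp h0
      have h2 := ENNReal.Tendsto.const_mul h1 (Or.inr hCfin)
      simpa using h2
    exact le_antisymm (ge_of_tendsto' htend hbound) zero_le
  have hYpos : ∀ᵐ s ∂Pm, 0 < Y s := by
    rw [ae_iff]
    have : {s | ¬ 0 < Y s} = {s | Y s ≤ 0} := by ext s; simp [not_lt]
    rw [this]
    exact hY0
  -- Step E : the main computation
  have hnn : 0 ≤ᵐ[Pm] fun s => -Real.log (Y s) :=
    Eventually.of_forall (fun s => neg_nonneg.2 (Real.log_nonpos (hYnn s) (hYle1 s)))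
  have key : ∫ s, Real.log (Y s) ∂Pm
      = -(∫⁻ s, ENNReal.ofReal (-Real.log (Y s)) ∂Pm).toReal := by
    have h1 : ∫ s, -Real.log (Y s) ∂Pm
        = (∫⁻ s, ENNReal.ofReal (-Real.log (Y s)) ∂Pm).toReal :=
      integral_eq_lintegral_of_nonneg_ae hnn
        ((Real.measurable_log.comp hYmeas).neg.aestronglyMeasurable)
    have h2 : ∫ s, Real.log (Y s) ∂Pm = -∫ s, -Real.log (Y s) ∂Pm := by
      rw [integral_neg, neg_neg]
    rw [h2, h1]
  set g : (Fin m → (Fin d → ℝ)) → ℝ → ℝ≥0∞ :=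
    fun s u => if Y s ≤ u then ENNReal.ofReal (1/u) else 0 with hg
  have hI1 : ∫⁻ s, ENNReal.ofReal (-Real.log (Y s)) ∂Pm
      = ∫⁻ s, (∫⁻ u in Set.Ioo (0:ℝ) 1, g s u) ∂Pm := by
    apply lintegral_congr_ae
    filter_upwards [hYpos] with s hs
    exact (log_eq_lintegral hs (hYle1 s)).symm
  have hgmeas : Measurable (Function.uncurry g) := by
    apply Measurable.ite
    · exact measurableSet_le (hYmeas.comp measurable_fst) measurable_snd
    · exact ENNReal.measurable_ofReal.comp (measurable_const.div measurable_snd)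
    · exact measurable_const
  have hI2 : ∫⁻ s, (∫⁻ u in Set.Ioo (0:ℝ) 1, g s u) ∂Pm
      = ∫⁻ u in Set.Ioo (0:ℝ) 1, (∫⁻ s, g s u ∂Pm) :=
    lintegral_lintegral_swap hgmeas.aemeasurable
  have hI3 : ∫⁻ u in Set.Ioo (0:ℝ) 1, (∫⁻ s, g s u ∂Pm)
      = ∫⁻ u in Set.Ioo (0:ℝ) 1, ∑ j ∈ Finset.Icc k m,
          ENNReal.ofReal (1/u) * ((m.choose j : ℝ≥0∞) * ENNReal.ofReal u ^ j
            * ENNReal.ofReal (1-u) ^ (m-j)) := by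
    apply setLIntegral_congr_fun measurableSet_Ioo
    intro u hu
    have hYu : MeasurableSet {s | Y s ≤ u} := measurableSet_le hYmeas measurable_const
    have hind : ∫⁻ s, g s u ∂Pm = ENNReal.ofReal (1/u) * Pm {s | Y s ≤ u} := by
      have heq : (fun s => g s u)
          = {s | Y s ≤ u}.indicator (fun _ => ENNReal.ofReal (1/u)) := by
        funext s
        rw [hg, Set.indicator_apply]
        simp only [Set.mem_setOf_eq]
      rw [heq, lintegral_indicator_const hYu]
    beta_reduce
    rw [hind, hevent u hu, Finset.mul_sum]
  have hI4 : ∫⁻ u in Set.Ioo (0:ℝ) 1, ∑ j ∈ Finset.Icc k m,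
          ENNReal.ofReal (1/u) * ((m.choose j : ℝ≥0∞) * ENNReal.ofReal u ^ j
            * ENNReal.ofReal (1-u) ^ (m-j))
      = ∑ j ∈ Finset.Icc k m, ENNReal.ofReal (1/(j:ℝ)) := by
    rw [lintegral_finset_sum]
    · apply Finset.sum_congr rfl
      intro j hj
      rw [Finset.mem_Icc] at hj
      exact term_integral (le_trans hk hj.1) hj.2
    · intro j _
      exact (ENNReal.measurable_ofReal.comp (measurable_const.div measurable_id)).mul
        ((measurable_const.mul ((ENNReal.measurable_ofReal.comp measurable_id).pow_const j)).mul
          ((ENNReal.measurable_ofReal.comp (measurable_const.sub measurable_id)).pow_const (m-j)))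
  rw [key, hI1, hI2, hI3, hI4]
  rw [ENNReal.toReal_sum (fun j _ => ENNReal.ofReal_ne_top)]
  have hsum : ∑ j ∈ Finset.Icc k m, (ENNReal.ofReal (1/(j:ℝ))).toReal
      = ∑ j ∈ Finset.Icc k m, (1:ℝ)/(j:ℝ) := by
    apply Finset.sum_congr rfl
    intro j hj
    rw [Finset.mem_Icc] at hj
    have : (0:ℝ) ≤ 1/(j:ℝ) := by positivity
    rw [ENNReal.toReal_ofReal this]
  rw [hsum]
  have hdg := digamma_nat_sub hk (show k ≤ N by omega)
  have hIcc : Finset.Ico k N = Finset.Icc k m := by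
    rw [show N = m + 1 by omega, Finset.Ico_add_one_right_eq_Icc]
  rw [hIcc] at hdg
  linarith
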